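/- Let q, z ∈ ℂ with |q| < 1, and let r, s ∈ ℂ with r² = q and s² = z. Then the determinants of Lehmer's tridiagonal matrices M(n) (with M_{i,i} = 1, M_{i,i+1} = s·r^(i-1), M_{i+1,i} = s·r^(i-1), all other entries zero) converge as n → ∞, and lim_{n→∞} det M(n) = Σ_{k≥0} (-1)^k · q^(k(k-1)) · z^k / (q;q)_k, where (q;q)_k = (1-q)(1-q²)⋯(1-q^k); in particular, this series converges. -/

import Mathlib

open Filter

/-- Lehmer's tridiagonal matrix `M(n)` (1-based: `M_{i,i} = 1`,
`M_{i,i+1} = s·r^(i-1)`, `M_{i+1,i} = s·r^(i-1)`), with 0-based `Fin n` indices. -/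
def lehmerM (r s : ℂ) (n : ℕ) : Matrix (Fin n) (Fin n) ℂ :=
  Matrix.of fun a b =>
    if (a : ℕ) = (b : ℕ) then 1
    else if (a : ℕ) + 1 = (b : ℕ) then s * r ^ (a : ℕ)
    else if (b : ℕ) + 1 = (a : ℕ) then s * r ^ (b : ℕ)
    else 0

/-- The `q`-Pochhammer symbol `(q;q)_k = ∏_{i=1}^{k} (1 - q^i)`. -/
def qPochhammer (q : ℂ) (k : ℕ) : ℂ :=
  ∏ i ∈ Finset.range k, (1 - q ^ (i + 1))

lemma lehmerM_apply (r s : ℂ) (n : ℕ) (a b : Fin n) :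
    lehmerM r s n a b = if (a : ℕ) = (b : ℕ) then 1
    else if (a : ℕ) + 1 = (b : ℕ) then s * r ^ (a : ℕ)
    else if (b : ℕ) + 1 = (a : ℕ) then s * r ^ (b : ℕ)
    else 0 := rfl

/-- The `q`-binomial-type coefficient appearing in the finite determinant formula. -/
noncomputable def lehB (q : ℂ) (n k : ℕ) : ℂ :=
  if 2*k ≤ n then (∏ i ∈ Finset.range k, (1 - q^(n - 2*k + 1 + i))) / qPochhammer q k else 0

lemma qPochhammer_ne_zero (q : ℂ) (hq : ‖q‖ < 1) (k : ℕ) : qPochhammer q k ≠ 0 := by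
  rw [qPochhammer]
  apply Finset.prod_ne_zero_iff.mpr
  intro i _ h
  have h1 : q ^ (i+1) = 1 := by linear_combination -h
  have h2 : ‖q ^ (i+1)‖ < 1 := by
    rw [norm_pow]
    exact pow_lt_one₀ (norm_nonneg q) hq (Nat.succ_ne_zero i)
  rw [h1] at h2
  simp at h2

lemma lehB_zero (q : ℂ) (n k : ℕ) (h : n < 2*k) : lehB q n k = 0 := by
  rw [lehB, if_neg (by omega)]

lemma lehB_zero' (q : ℂ) (n : ℕ) : lehB q n 0 = 1 := by
  simp [lehB, qPochhammer]

lemma lehB_rec (q : ℂ) (hq : ‖q‖ < 1) (n k : ℕ) :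
    lehB q (n+2) (k+1) = q^(k+1) * lehB q (n+1) (k+1) + lehB q n k := by
  rcases le_or_gt (2*k) n with h | h
  · rcases eq_or_lt_of_le h with h2 | h2
    · rw [lehB, if_pos (by omega), lehB, if_neg (by omega), lehB, if_pos (by omega)]
      have hk : qPochhammer q k ≠ 0 := qPochhammer_ne_zero q hq k
      have hk1 : qPochhammer q (k+1) ≠ 0 := qPochhammer_ne_zero q hq (k+1)
      have e1 : ∀ i, n + 2 - 2*(k+1) + 1 + i = i + 1 := by omega
      have e2 : ∀ i, n - 2*k + 1 + i = i + 1 := by omega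
      have p1 : (∏ i ∈ Finset.range (k+1), (1 - q^(n + 2 - 2*(k+1) + 1 + i))) = qPochhammer q (k+1) := by
        rw [qPochhammer]; exact Finset.prod_congr rfl fun i _ => by rw [e1 i]
      have p2 : (∏ i ∈ Finset.range k, (1 - q^(n - 2*k + 1 + i))) = qPochhammer q k := by
        rw [qPochhammer]; exact Finset.prod_congr rfl fun i _ => by rw [e2 i]
      rw [p1, p2, div_self hk1, div_self hk]
      ring
    · obtain ⟨m, rfl⟩ : ∃ m, n = 2*k + m := ⟨n - 2*k, by omega⟩
      have hm : 1 ≤ m := by omega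
      rw [lehB, if_pos (by omega), lehB, if_pos (by omega), lehB, if_pos (by omega)]
      have hk : qPochhammer q k ≠ 0 := qPochhammer_ne_zero q hq k
      have hk1 : qPochhammer q (k+1) ≠ 0 := qPochhammer_ne_zero q hq (k+1)
      have e1 : ∀ i, 2*k + m + 2 - 2*(k+1) + 1 + i = m + 1 + i := by omega
      have e2 : ∀ i, 2*k + m + 1 - 2*(k+1) + 1 + i = m + i := by omega
      have e3 : ∀ i, 2*k + m - 2*k + 1 + i = m + 1 + i := by omega
      simp only [e1, e2, e3]
      have hq1 : qPochhammer q (k+1) = qPochhammer q k * (1 - q^(k+1)) := by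
        rw [qPochhammer, qPochhammer, Finset.prod_range_succ]
      have h1k : (1 - q^(k+1)) ≠ 0 := by
        intro hh; exact hk1 (by rw [hq1, hh, mul_zero])
      have key : (∏ i ∈ Finset.range (k+1), (1 - q^(m+1+i)))
          = q^(k+1) * (∏ i ∈ Finset.range (k+1), (1 - q^(m+i)))
            + (1 - q^(k+1)) * ∏ i ∈ Finset.range k, (1 - q^(m+1+i)) := by
        have hR : (∏ i ∈ Finset.range k, (1 - q^(m+(i+1)))) = ∏ i ∈ Finset.range k, (1 - q^(m+1+i)) :=
          Finset.prod_congr rfl (fun i _ => by rw [show m+(i+1) = m+1+i by omega])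
        rw [Finset.prod_range_succ, Finset.prod_range_succ', hR]
        ring
      rw [hq1, key]
      field_simp
  · rw [lehB_zero q _ _ (by omega), lehB_zero q _ _ (by omega), lehB_zero q _ _ (by omega)]
    ring

lemma lehB_tendsto (q : ℂ) (hq : ‖q‖ < 1) (k : ℕ) :
    Tendsto (fun n : ℕ => lehB q n k) atTop (nhds (1 / qPochhammer q k)) := by
  have hpow : ∀ i : ℕ, Tendsto (fun n : ℕ => q ^ (n - 2*k + 1 + i)) atTop (nhds 0) := by
    intro i
    have h1 : Tendsto (fun n : ℕ => n - 2*k + 1 + i) atTop atTop :=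
      tendsto_atTop_atTop.mpr (fun b => ⟨b + 2*k, fun a ha => by omega⟩)
    exact (tendsto_pow_atTop_nhds_zero_of_norm_lt_one hq).comp h1
  have hfac : ∀ i : ℕ, Tendsto (fun n : ℕ => 1 - q ^ (n - 2*k + 1 + i)) atTop (nhds 1) := by
    intro i; simpa using tendsto_const_nhds.sub (hpow i)
  have hprod : Tendsto (fun n : ℕ => ∏ i ∈ Finset.range k, (1 - q^(n - 2*k + 1 + i))) atTop
      (nhds (∏ _i ∈ Finset.range k, (1:ℂ))) :=
    tendsto_finset_prod _ (fun i _ => hfac i)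
  have h2 : Tendsto (fun n : ℕ => (∏ i ∈ Finset.range k, (1 - q^(n - 2*k + 1 + i))) / qPochhammer q k)
      atTop (nhds (1 / qPochhammer q k)) := by
    simpa using hprod.div_const (qPochhammer q k)
  apply h2.congr'
  filter_upwards [eventually_ge_atTop (2*k)] with n hn
  rw [lehB, if_pos hn]

lemma lehB_bound (q : ℂ) (hq : ‖q‖ < 1) (n k : ℕ) :
    ‖lehB q n k‖ ≤ (2 / (1 - ‖q‖))^k := by
  have h01 : (0:ℝ) < 1 - ‖q‖ := by linarith
  rw [lehB]
  split_ifs with h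
  · rw [norm_div]
    have hnum : ‖∏ i ∈ Finset.range k, (1 - q^(n - 2*k + 1 + i))‖ ≤ 2^k := by
      rw [norm_prod]
      calc ∏ i ∈ Finset.range k, ‖1 - q^(n - 2*k + 1 + i)‖
          ≤ ∏ _i ∈ Finset.range k, (2:ℝ) := by
            apply Finset.prod_le_prod (fun i _ => norm_nonneg _)
            intro i _
            calc ‖1 - q^(n - 2*k + 1 + i)‖ ≤ ‖(1:ℂ)‖ + ‖q^(n - 2*k + 1 + i)‖ := norm_sub_le _ _
              _ ≤ 1 + 1 := by
                  rw [norm_one, norm_pow]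
                  have : ‖q‖ ^ (n - 2*k + 1 + i) ≤ 1 := pow_le_one₀ (norm_nonneg q) hq.le
                  linarith
              _ = 2 := by norm_num
        _ = 2^k := by rw [Finset.prod_const, Finset.card_range]
    have hden : (1 - ‖q‖)^k ≤ ‖qPochhammer q k‖ := by
      rw [qPochhammer, norm_prod]
      calc (1 - ‖q‖)^k = ∏ _i ∈ Finset.range k, (1 - ‖q‖) := by
            rw [Finset.prod_const, Finset.card_range]
        _ ≤ ∏ i ∈ Finset.range k, ‖1 - q^(i+1)‖ := ?_
      apply Finset.prod_le_prod (fun i _ => h01.le)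
      intro i _
      have h1 : ‖q^(i+1)‖ ≤ ‖q‖ := by
        rw [norm_pow]
        calc ‖q‖^(i+1) ≤ ‖q‖^1 :=
          pow_le_pow_of_le_one (norm_nonneg q) hq.le (by omega)
          _ = ‖q‖ := pow_one _
      calc 1 - ‖q‖ ≤ ‖(1:ℂ)‖ - ‖q^(i+1)‖ := by rw [norm_one]; linarith
        _ ≤ ‖1 - q^(i+1)‖ := norm_sub_norm_le _ _
    rw [div_pow]
    exact div_le_div₀ (by positivity) hnum (by positivity) hden
  · simp only [norm_zero]
    positivity

lemma det_lehmerM_rec (r s : ℂ) (n : ℕ) :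
    (lehmerM r s (n+2)).det
      = (lehmerM r (s*r) (n+1)).det - s^2 * (lehmerM r (s*r^2) n).det := by
  have e0 : (((Fin.succ (0 : Fin (n+1))).succAbove (0 : Fin (n+1))) : ℕ) = 0 := by
    simp [Fin.succAbove, Fin.lt_def]
  have es : ∀ b : Fin n, (((Fin.succ (0 : Fin (n+1))).succAbove (Fin.succ b)) : ℕ) = (b : ℕ) + 2 := by
    intro b; simp [Fin.succAbove, Fin.lt_def]
  have hminor0 : (lehmerM r s (n+2)).submatrix Fin.succ Fin.succ = lehmerM r (s*r) (n+1) := by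
    ext a b
    simp only [Matrix.submatrix_apply, lehmerM_apply, Fin.val_succ]
    split_ifs <;> first | rfl | omega | (exfalso; omega) | tauto | (rw [pow_succ]; ring)
  rw [Matrix.det_succ_row_zero]
  rw [Fin.sum_univ_succ, Fin.sum_univ_succ]
  have hz : ∀ j : Fin n, lehmerM r s (n+2) 0 (Fin.succ (Fin.succ j)) = 0 := by
    intro j
    rw [lehmerM_apply]
    simp only [Fin.val_succ, Fin.val_zero]
    split_ifs <;> first | rfl | omega | (exfalso; omega) | tauto
  have hsum0 : ∑ j : Fin n,
      (-1 : ℂ) ^ ((Fin.succ (Fin.succ j) : Fin (n+2)) : ℕ) *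
        lehmerM r s (n+2) 0 (Fin.succ (Fin.succ j)) *
        ((lehmerM r s (n+2)).submatrix Fin.succ (Fin.succ (Fin.succ j)).succAbove).det = 0 := by
    apply Finset.sum_eq_zero
    intro j _
    rw [hz j]; ring
  rw [hsum0]
  have h00 : lehmerM r s (n+2) 0 0 = 1 := by simp [lehmerM_apply]
  have h01 : lehmerM r s (n+2) 0 (Fin.succ 0) = s := by
    rw [lehmerM_apply]
    simp only [Fin.val_succ, Fin.val_zero]
    norm_num
  have hA0 : (Fin.succAbove (0 : Fin (n+2))) = Fin.succ := Fin.succAbove_zero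
  set N := (lehmerM r s (n+2)).submatrix Fin.succ (Fin.succ (0 : Fin (n+1))).succAbove with hN
  have hNdet : N.det = s * (lehmerM r (s*r^2) n).det := by
    rw [Matrix.det_succ_column_zero, Fin.sum_univ_succ]
    have hN00 : N 0 0 = s := by
      rw [hN]
      simp only [Matrix.submatrix_apply, lehmerM_apply, Fin.val_succ, e0]
      norm_num
    have hNz : ∀ i : Fin n, N (Fin.succ i) 0 = 0 := by
      intro i
      rw [hN]
      simp only [Matrix.submatrix_apply, lehmerM_apply, Fin.val_succ, e0]
      split_ifs <;> first | rfl | omega | (exfalso; omega) | tauto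
    have hminor : N.submatrix (Fin.succAbove 0) Fin.succ = lehmerM r (s*r^2) n := by
      ext a b
      rw [hN]
      simp only [Matrix.submatrix_apply, lehmerM_apply, Fin.succAbove_zero, Fin.val_succ, es]
      split_ifs <;> first | rfl | omega | (exfalso; omega) | tauto |
        (rw [show ((_:ℕ)+1)+1 = _+2 from rfl, pow_add]; ring)
    rw [hN00, hminor]
    have : ∑ i : Fin n, (-1 : ℂ) ^ ((Fin.succ i : Fin (n+1)) : ℕ) * N (Fin.succ i) 0 *
        (N.submatrix (Fin.succ i).succAbove Fin.succ).det = 0 := by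
      apply Finset.sum_eq_zero; intro i _; rw [hNz i]; ring
    rw [this]
    simp
  rw [h00, h01, hA0, hminor0, hNdet]
  simp only [Fin.val_zero, Fin.val_succ, pow_zero, pow_one]
  ring

lemma det_lehmerM_formula (r : ℂ) (hq : ‖(r^2 : ℂ)‖ < 1) :
    ∀ n : ℕ, ∀ s : ℂ, (lehmerM r s n).det
      = ∑ k ∈ Finset.range (n+1), (-1)^k * (r^2)^(k*(k-1)) * (s^2)^k * lehB (r^2) n k := by
  intro n
  induction n using Nat.strong_induction_on with
  | _ n ih =>
    match n, ih with
    | 0, _ =>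
      intro s
      simp [Matrix.det_fin_zero, lehB_zero']
    | 1, _ =>
      intro s
      rw [Matrix.det_fin_one]
      have h0 : lehmerM r s 1 0 0 = 1 := by simp [lehmerM_apply]
      rw [h0, Finset.sum_range_succ, Finset.sum_range_one]
      rw [lehB_zero (r^2) 1 1 (by omega), lehB_zero']
      simp
    | (m+2), ih =>
      intro s
      rw [det_lehmerM_rec, ih (m+1) (by omega) (s*r), ih m (by omega) (s*r^2)]
      simp only [show m+1+1 = m+2 from rfl]
      have hstep : ∀ k ∈ Finset.range (m+2),
          (-1:ℂ)^(k+1) * (r^2)^((k+1)*k) * (s^2)^(k+1) * lehB (r^2) (m+2) (k+1)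
          = (-1)^(k+1) * (r^2)^((k+1)*k) * ((s*r)^2)^(k+1) * lehB (r^2) (m+1) (k+1)
            + (-(s^2)) * ((-1)^k * (r^2)^(k*(k-1)) * ((s*r^2)^2)^k * lehB (r^2) m k) := by
        intro k _
        rw [lehB_rec _ hq]
        have hkk : (k+1)*k = k*(k-1) + 2*k := by
          cases k with
          | zero => simp
          | succ j => simp only [Nat.add_sub_cancel]; ring
        rw [hkk, pow_add]
        ring
      have hRHS : ∑ k ∈ Finset.range (m+2+1), (-1:ℂ)^k * (r^2)^(k*(k-1)) * (s^2)^k * lehB (r^2) (m+2) k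
          = (∑ k ∈ Finset.range (m+2), (-1)^k * (r^2)^(k*(k-1)) * ((s*r)^2)^k * lehB (r^2) (m+1) k)
            - s^2 * ∑ k ∈ Finset.range (m+1), (-1)^k * (r^2)^(k*(k-1)) * ((s*r^2)^2)^k * lehB (r^2) m k := by
        rw [Finset.sum_range_succ' (fun k => (-1:ℂ)^k * (r^2)^(k*(k-1)) * (s^2)^k * lehB (r^2) (m+2) k) (m+2)]
        simp only [Nat.add_sub_cancel]
        rw [Finset.sum_congr rfl hstep, Finset.sum_add_distrib]
        have e1 : ∑ k ∈ Finset.range (m+2),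
            (-1:ℂ)^(k+1) * (r^2)^((k+1)*k) * ((s*r)^2)^(k+1) * lehB (r^2) (m+1) (k+1)
            = (∑ k ∈ Finset.range (m+2), (-1:ℂ)^k * (r^2)^(k*(k-1)) * ((s*r)^2)^k * lehB (r^2) (m+1) k)
              - 1 := by
          have := Finset.sum_range_succ' (fun k => (-1:ℂ)^k * (r^2)^(k*(k-1)) * ((s*r)^2)^k * lehB (r^2) (m+1) k) (m+2)
          rw [Finset.sum_range_succ (fun k => (-1:ℂ)^k * (r^2)^(k*(k-1)) * ((s*r)^2)^k * lehB (r^2) (m+1) k) (m+2)] at this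
          rw [lehB_zero (r^2) (m+1) (m+2) (by omega)] at this
          simp only [Nat.add_sub_cancel, mul_zero, add_zero] at this
          rw [lehB_zero'] at this
          norm_num at this
          linear_combination -this
        have e2 : ∑ k ∈ Finset.range (m+2),
            (-(s^2)) * ((-1:ℂ)^k * (r^2)^(k*(k-1)) * ((s*r^2)^2)^k * lehB (r^2) m k)
            = -(s^2) * ∑ k ∈ Finset.range (m+1), (-1:ℂ)^k * (r^2)^(k*(k-1)) * ((s*r^2)^2)^k * lehB (r^2) m k := by
          rw [← Finset.mul_sum]
          rw [Finset.sum_range_succ (fun k => (-1:ℂ)^k * (r^2)^(k*(k-1)) * ((s*r^2)^2)^k * lehB (r^2) m k) (m+1)]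
          rw [lehB_zero (r^2) m (m+1) (by omega)]
          simp
        rw [e1, e2]
        rw [lehB_zero']
        ring
      rw [hRHS]

/-- Let `q, z ∈ ℂ` with `|q| < 1` and `r, s ∈ ℂ` with `r² = q`, `s² = z`. Then the
series `Σ_{k≥0} (-1)^k q^(k(k-1)) z^k / (q;q)_k` converges, and the determinants
of Lehmer's tridiagonal matrices `M(n)` converge to its sum as `n → ∞`. -/
theorem det_lehmerM_tendsto (q z r s : ℂ) (hq : ‖q‖ < 1)
    (hr : r ^ 2 = q) (hs : s ^ 2 = z) :
    Summable (fun k : ℕ => (-1 : ℂ) ^ k * q ^ (k * (k - 1)) * z ^ k / qPochhammer q k) ∧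
    Tendsto (fun n : ℕ => (lehmerM r s n).det) atTop
      (nhds (∑' k : ℕ, (-1 : ℂ) ^ k * q ^ (k * (k - 1)) * z ^ k / qPochhammer q k)) := by
  subst hr hs
  have hq' : ‖(r^2 : ℂ)‖ < 1 := by simpa using hq
  set a : ℝ := ‖(r^2 : ℂ)‖ with ha
  have ha0 : 0 ≤ a := norm_nonneg _
  have ha1 : a < 1 := hq'
  set C : ℝ := ‖s‖^2 * (2 / (1 - a)) with hC
  have h1a : (0:ℝ) < 1 - a := by linarith
  have hC0 : 0 ≤ C := by
    rw [hC]; exact mul_nonneg (by positivity) (div_nonneg (by norm_num) h1a.le)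
  set bound : ℕ → ℝ := fun k => a^(k*(k-1)) * C^k with hbdef
  have hb0 : ∀ k, 0 ≤ bound k := fun k => mul_nonneg (pow_nonneg ha0 _) (pow_nonneg hC0 _)
  set f : ℕ → ℕ → ℂ := fun n k => (-1)^k * (r^2)^(k*(k-1)) * (s^2)^k * lehB (r^2) n k with hf
  set g : ℕ → ℂ := fun k => (-1)^k * (r^2)^(k*(k-1)) * (s^2)^k / qPochhammer (r^2) k with hg
  have hbound : ∀ n k, ‖f n k‖ ≤ bound k := by
    intro n k
    have h1 : ‖f n k‖ = a^(k*(k-1)) * (‖s‖^2)^k * ‖lehB (r^2) n k‖ := by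
      simp only [hf, norm_mul, norm_pow, norm_neg, norm_one, one_pow, one_mul, ha]
    rw [h1, hbdef]
    have h2 : ‖lehB (r^2) n k‖ ≤ (2/(1-a))^k := lehB_bound (r^2) hq' n k
    calc a^(k*(k-1)) * (‖s‖^2)^k * ‖lehB (r^2) n k‖
        ≤ a^(k*(k-1)) * (‖s‖^2)^k * (2/(1-a))^k := by
          exact mul_le_mul_of_nonneg_left h2
            (mul_nonneg (pow_nonneg ha0 _) (pow_nonneg (sq_nonneg _) _))
      _ = a^(k*(k-1)) * C^k := by rw [hC, mul_pow, mul_assoc]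
  have hbsum : Summable bound := by
    have hratio : ∀ᶠ k in atTop, ‖bound (k+1)‖ ≤ (1/2 : ℝ) * ‖bound k‖ := by
      have htend : Tendsto (fun k : ℕ => C * (a^2)^k) atTop (nhds 0) := by
        simpa using (tendsto_pow_atTop_nhds_zero_of_norm_lt_one
          (by rw [Real.norm_of_nonneg (sq_nonneg a)]; nlinarith : ‖a^2‖ < 1)).const_mul C
      filter_upwards [htend.eventually_le_const (by norm_num : (0:ℝ) < 1/2)] with k hk
      have hkk : (k+1)*k = k*(k-1) + 2*k := by
        cases k with
        | zero => simp
        | succ j => simp only [Nat.add_sub_cancel]; ring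
      have hb1 : bound (k+1) = (C * (a^2)^k) * bound k := by
        simp only [hbdef, Nat.add_sub_cancel]
        rw [hkk, pow_add]
        ring
      rw [Real.norm_of_nonneg (hb0 _), Real.norm_of_nonneg (hb0 _), hb1]
      exact mul_le_mul_of_nonneg_right hk (hb0 k)
    exact summable_of_ratio_norm_eventually_le (by norm_num) hratio
  have htendsto : ∀ k, Tendsto (fun n => f n k) atTop (nhds (g k)) := by
    intro k
    have := (lehB_tendsto (r^2) hq' k).const_mul ((-1:ℂ)^k * (r^2)^(k*(k-1)) * (s^2)^k)
    simpa only [hf, hg, mul_one_div, mul_assoc] using this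
  have hgsum : Summable g := by
    apply Summable.of_norm_bounded hbsum
    intro k
    exact le_of_tendsto (htendsto k).norm (Eventually.of_forall (fun n => hbound n k))
  have htsum : ∀ n, (lehmerM r s n).det = ∑' k, f n k := by
    intro n
    rw [det_lehmerM_formula r hq' n s]
    refine (tsum_eq_sum ?_).symm
    intro k hk
    simp only [Finset.mem_range, not_lt] at hk
    simp only [hf, lehB_zero (r^2) n k (by omega), mul_zero]
  constructor
  · exact hgsum
  · have hmain := tendsto_tsum_of_dominated_convergence hbsum htendsto
      (Eventually.of_forall hbound)
    exact hmain.congr (fun n => (htsum n).symm)
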